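/- Let ρ > 0, λ > 0, μ > 0, γ ≥ 0, γ_w ≥ 0, and let ℓ : ℝ^d → ℝ be differentiable and μ-strongly convex. For w ∈ ℝ^d, let θ̂(w) denote the unique minimizer over θ ∈ ℝ^d of H(θ; w) := ℓ(θ) + γ·φ_ρ(θ) − λ·⟨θ, w⟩, and define F(w) := min_θ H(θ; w) + (λ/2)·‖w‖₂² + γ_w·φ_ρ(w). Then: (i) θ̂(w) exists and is unique for every w; (ii) F is differentiable with ∇F(w) = λ·(w − θ̂(w)) + γ_w·∇φ_ρ(w); (iii) ∇F is Lipschitz with constant L_F = λ + λ²/μ + γ_w/ρ; and (iv) if in addition λ < μ, then F is (λ(μ−λ)/μ)-strongly convex. -/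

import Mathlib

open RealInnerProductSpace

set_option maxHeartbeats 1000000


lemma lc_deriv (t : ℝ) : HasDerivAt (fun s => Real.log (Real.cosh s)) (Real.tanh t) t := by
  have h := (Real.hasDerivAt_cosh t).log (Real.cosh_pos t).ne'
  simpa [Real.tanh_eq_sinh_div_cosh] using h

lemma tanh_deriv (t : ℝ) : HasDerivAt Real.tanh (1 / Real.cosh t ^ 2) t := by
  have h := (Real.hasDerivAt_sinh t).div (Real.hasDerivAt_cosh t) (Real.cosh_pos t).ne'
  have e : (Real.cosh t * Real.cosh t - Real.sinh t * Real.sinh t) / Real.cosh t ^ 2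
      = 1 / Real.cosh t ^ 2 := by
    rw [show Real.cosh t * Real.cosh t - Real.sinh t * Real.sinh t
        = Real.cosh t ^ 2 - Real.sinh t ^ 2 by ring, Real.cosh_sq_sub_sinh_sq]
  have h2 : HasDerivAt (fun s => Real.sinh s / Real.cosh s) (1 / Real.cosh t ^ 2) t := e ▸ h
  have : Real.tanh = fun s => Real.sinh s / Real.cosh s := by
    funext s; exact Real.tanh_eq_sinh_div_cosh s
  rw [this]; exact h2

lemma tanh_mono : Monotone Real.tanh := by
  have hd : ∀ t : ℝ, HasDerivAt Real.tanh (1 / Real.cosh t ^ 2) t := tanh_deriv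
  apply monotone_of_deriv_nonneg
  · exact fun t => (hd t).differentiableAt
  · intro t
    rw [(hd t).deriv]
    positivity

lemma tanh_lip (a b : ℝ) : |Real.tanh a - Real.tanh b| ≤ |a - b| := by
  have hL : LipschitzWith 1 Real.tanh := by
    apply lipschitzWith_of_nnnorm_deriv_le (fun t => (tanh_deriv t).differentiableAt)
    intro t
    rw [(tanh_deriv t).deriv]
    have h1 : (1:ℝ) ≤ Real.cosh t := Real.one_le_cosh t
    have : |1 / Real.cosh t ^ 2| ≤ 1 := by
      rw [abs_of_nonneg (by positivity)]
      rw [div_le_one (by positivity)]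
      nlinarith
    rw [abs_of_nonneg (by positivity)] at this
    simpa [← NNReal.coe_le_coe, Real.norm_eq_abs, abs_of_nonneg (by positivity : (0:ℝ) ≤ (Real.cosh t ^ 2)⁻¹)] using this
  have := hL.dist_le_mul a b
  simpa [Real.dist_eq] using this

lemma lc_convex (a b : ℝ) :
    Real.tanh a * (b - a) + Real.log (Real.cosh a) ≤ Real.log (Real.cosh b) := by
  set f := fun s => Real.log (Real.cosh s)
  have hdf : ∀ t, HasDerivAt f (Real.tanh t) t := lc_deriv
  have hdiff : Differentiable ℝ f := fun t => (hdf t).differentiableAt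
  rcases le_total a b with h | h
  · have := Convex.mul_sub_le_image_sub_of_le_deriv (convex_Ici a)
      (hdiff.continuous.continuousOn) (hdiff.differentiableOn)
      (fun x hx => by
        rw [(hdf x).deriv]
        exact tanh_mono (le_of_lt (by simpa using hx))) a (by simp) b (by simpa using h) h
    linarith
  · have := Convex.image_sub_le_mul_sub_of_deriv_le (convex_Iic a)
      (hdiff.continuous.continuousOn) (hdiff.differentiableOn)
      (fun x hx => by
        rw [(hdf x).deriv]
        exact tanh_mono (le_of_lt (by simpa using hx))) b (by simpa using h) a (by simp) h
    linarith

variable {E : Type*} [NormedAddCommGroup E] [InnerProductSpace ℝ E] [CompleteSpace E]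

lemma quad_grad {f : E → ℝ} {g w : E} {C : ℝ} (hC : 0 ≤ C)
    (hb : ∀ v, |f v - f w - ⟪g, v - w⟫| ≤ C * ‖v - w‖ ^ 2) : HasGradientAt f g w := by
  rw [hasGradientAt_iff_isLittleO, Asymptotics.isLittleO_iff]
  intro ε hε
  have hpos : 0 < ε / (C + 1) := by positivity
  filter_upwards [Metric.ball_mem_nhds w hpos] with v hv
  rw [Metric.mem_ball, dist_eq_norm] at hv
  have h1 := hb v
  have h2 : C * ‖v - w‖ ≤ ε := by
    have h3 : C * ‖v - w‖ ≤ C * (ε / (C + 1)) := mul_le_mul_of_nonneg_left hv.le hC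
    have h4 : C * (ε / (C + 1)) ≤ ε := by
      rw [← mul_div_assoc, div_le_iff₀ (by linarith : (0:ℝ) < C + 1)]
      nlinarith
    linarith
  calc ‖f v - f w - ⟪g, v - w⟫‖ = |f v - f w - ⟪g, v - w⟫| := rfl
    _ ≤ C * ‖v - w‖ ^ 2 := h1
    _ = (C * ‖v - w‖) * ‖v - w‖ := by ring
    _ ≤ ε * ‖v - w‖ := by nlinarith [norm_nonneg (v - w)]

lemma grad_inner_right (w x : E) : HasGradientAt (fun θ : E => ⟪θ, w⟫) w x := by
  apply quad_grad le_rfl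
  intro v
  have : ⟪v, w⟫ - ⟪x, w⟫ - ⟪w, v - x⟫ = 0 := by
    rw [real_inner_comm (v - x) w, inner_sub_left]; ring
  simp [this]

lemma grad_combo3 {f1 f2 f3 : E → ℝ} {a1 a2 a3 x : E} (c1 c2 c3 : ℝ)
    (h1 : HasGradientAt f1 a1 x) (h2 : HasGradientAt f2 a2 x) (h3 : HasGradientAt f3 a3 x) :
    HasGradientAt (fun y => c1 * f1 y + c2 * f2 y + c3 * f3 y)
      (c1 • a1 + c2 • a2 + c3 • a3) x := by
  rw [hasGradientAt_iff_hasFDerivAt] at *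
  have h := ((h1.const_mul c1).add (h2.const_mul c2)).add (h3.const_mul c3)
  refine h.congr_fderiv ?_
  ext v
  simp [inner_add_left, real_inner_smul_left]




variable {d : ℕ} {ρ : ℝ}

lemma lc_convex_rho (hρ : 0 < ρ) (s t : ℝ) :
    Real.tanh (s/ρ) * (t - s) + ρ * Real.log (Real.cosh (s/ρ))
      ≤ ρ * Real.log (Real.cosh (t/ρ)) := by
  have h2 := mul_le_mul_of_nonneg_left (lc_convex (s/ρ) (t/ρ)) hρ.le
  rw [mul_add] at h2
  have e : ρ * (Real.tanh (s/ρ) * (t/ρ - s/ρ)) = Real.tanh (s/ρ) * (t - s) := by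
    field_simp
  linarith

lemma phi_grad (hρ : 0 < ρ) (x g : EuclideanSpace ℝ (Fin d))
    (hg : ∀ n, g n = Real.tanh (x n / ρ)) :
    HasGradientAt (fun y : EuclideanSpace ℝ (Fin d) => ρ * ∑ n, Real.log (Real.cosh (y n / ρ)))
      g x := by
  have hterm : ∀ n : Fin d, HasFDerivAt
      (fun y : EuclideanSpace ℝ (Fin d) => ρ * Real.log (Real.cosh (y n / ρ)))
      (Real.tanh (x n / ρ) • (EuclideanSpace.proj n : EuclideanSpace ℝ (Fin d) →L[ℝ] ℝ)) x := by
    intro n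
    have h1 : HasDerivAt (fun t : ℝ => ρ * Real.log (Real.cosh (t / ρ)))
        (Real.tanh (x n / ρ)) (x n) := by
      have h2 := ((lc_deriv ((x n)/ρ)).comp (x n) ((hasDerivAt_id (x n)).div_const ρ)).const_mul ρ
      refine h2.congr_deriv ?_
      field_simp
    have hp : HasFDerivAt (fun y : EuclideanSpace ℝ (Fin d) => y n)
        (EuclideanSpace.proj n : EuclideanSpace ℝ (Fin d) →L[ℝ] ℝ) x :=
      (EuclideanSpace.proj n : EuclideanSpace ℝ (Fin d) →L[ℝ] ℝ).hasFDerivAt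
    exact HasDerivAt.comp_hasFDerivAt (h₂ := fun t : ℝ => ρ * Real.log (Real.cosh (t / ρ))) x h1 hp
  have hsum := HasFDerivAt.fun_sum (fun n (_ : n ∈ Finset.univ) => hterm n)
  have heq : (fun y : EuclideanSpace ℝ (Fin d) => ρ * ∑ n, Real.log (Real.cosh (y n / ρ)))
      = fun y : EuclideanSpace ℝ (Fin d) => ∑ n, ρ * Real.log (Real.cosh (y n / ρ)) := by
    funext y; rw [Finset.mul_sum]
  rw [hasGradientAt_iff_hasFDerivAt, heq]
  refine hsum.congr_fderiv ?_
  ext v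
  simp [InnerProductSpace.toDual_apply_apply, PiLp.inner_apply, RCLike.inner_apply,
    ContinuousLinearMap.sum_apply, hg, mul_comm]

lemma phi_convex (hρ : 0 < ρ) (x y gx : EuclideanSpace ℝ (Fin d))
    (hgx : ∀ n, gx n = Real.tanh (x n / ρ)) :
    ρ * ∑ n, Real.log (Real.cosh (x n / ρ)) + ⟪gx, y - x⟫
      ≤ ρ * ∑ n, Real.log (Real.cosh (y n / ρ)) := by
  have hin : ⟪gx, y - x⟫ = ∑ n, Real.tanh (x n / ρ) * (y n - x n) := by
    simp [PiLp.inner_apply, RCLike.inner_apply, hgx, mul_comm]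
  rw [hin, Finset.mul_sum, Finset.mul_sum, ← Finset.sum_add_distrib]
  apply Finset.sum_le_sum
  intro n _
  have := lc_convex_rho hρ (x n) (y n)
  linarith

lemma tanh_vec_lip (hρ : 0 < ρ) (x y gx gy : EuclideanSpace ℝ (Fin d))
    (hgx : ∀ n, gx n = Real.tanh (x n / ρ)) (hgy : ∀ n, gy n = Real.tanh (y n / ρ)) :
    ‖gx - gy‖ ≤ (1/ρ) * ‖x - y‖ := by
  rw [EuclideanSpace.norm_eq, EuclideanSpace.norm_eq]
  have e : (1/ρ) * Real.sqrt (∑ n, ‖(x - y) n‖ ^ 2)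
      = Real.sqrt ((1/ρ)^2 * ∑ n, ‖(x - y) n‖ ^ 2) := by
    rw [Real.sqrt_mul (sq_nonneg _), Real.sqrt_sq (by positivity)]
  rw [e]
  apply Real.sqrt_le_sqrt
  rw [Finset.mul_sum]
  apply Finset.sum_le_sum
  intro n _
  have h1 : |Real.tanh (x n / ρ) - Real.tanh (y n / ρ)| ≤ (1/ρ) * |x n - y n| := by
    calc |Real.tanh (x n / ρ) - Real.tanh (y n / ρ)| ≤ |x n / ρ - y n / ρ| :=
          tanh_lip (x n / ρ) (y n / ρ)
      _ = (1/ρ) * |x n - y n| := by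
          rw [div_sub_div_same, abs_div, abs_of_pos hρ]; ring
  have h2 : ‖(gx - gy) n‖ = |Real.tanh (x n / ρ) - Real.tanh (y n / ρ)| := by
    simp [PiLp.sub_apply, hgx, hgy, Real.norm_eq_abs]
  have h3 : ‖(x - y) n‖ = |x n - y n| := by simp [PiLp.sub_apply, Real.norm_eq_abs]
  rw [h2, h3]
  nlinarith [abs_nonneg (Real.tanh (x n / ρ) - Real.tanh (y n / ρ)), abs_nonneg (x n - y n)]



/-- Proposition 1 / Moreau-type envelope: Let ρ, λ, μ > 0, γ, γ_w ≥ 0,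
and let ℓ : ℝ^d → ℝ be differentiable and μ-strongly convex.  For
H(θ; w) = ℓ(θ) + γ·φ_ρ(θ) − λ·⟨θ, w⟩  and  F(w) = min_θ H(θ; w) + (λ/2)‖w‖² + γ_w·φ_ρ(w),
(i) the minimizer θ̂(w) of H(·; w) exists and is unique;
(ii) F is differentiable with ∇F(w) = λ(w − θ̂(w)) + γ_w·∇φ_ρ(w);
(iii) ∇F is Lipschitz with constant L_F = λ + λ²/μ + γ_w/ρ;
(iv) if λ < μ then F is (λ(μ−λ)/μ)-strongly convex. -/
theorem stmt7 (d : ℕ) (ρ lam μ γ γw : ℝ)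
    (hρ : 0 < ρ) (hlam : 0 < lam) (hμ : 0 < μ) (hγ : 0 ≤ γ) (hγw : 0 ≤ γw)
    (ℓ : EuclideanSpace ℝ (Fin d) → ℝ)
    (gℓ : EuclideanSpace ℝ (Fin d) → EuclideanSpace ℝ (Fin d))
    (hdiff : ∀ x, HasGradientAt ℓ (gℓ x) x)
    (hsc : ∀ x y, ℓ y ≥ ℓ x + ⟪gℓ x, y - x⟫ + μ / 2 * ‖y - x‖ ^ 2)
    (φ : EuclideanSpace ℝ (Fin d) → ℝ)
    (hφ : ∀ x, φ x = ρ * ∑ n, Real.log (Real.cosh (x n / ρ)))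
    (gradφ : EuclideanSpace ℝ (Fin d) → EuclideanSpace ℝ (Fin d))
    (hgradφ : ∀ x n, gradφ x n = Real.tanh (x n / ρ))
    (H : EuclideanSpace ℝ (Fin d) → EuclideanSpace ℝ (Fin d) → ℝ)
    (hH : ∀ θ w, H θ w = ℓ θ + γ * φ θ - lam * ⟪θ, w⟫) :
    ∃ θhat : EuclideanSpace ℝ (Fin d) → EuclideanSpace ℝ (Fin d),
      -- (i) existence and uniqueness of the minimizer of H(·; w)
      (∀ w θ, H (θhat w) w ≤ H θ w) ∧
      (∀ w θ', (∀ θ, H θ' w ≤ H θ w) → θ' = θhat w) ∧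
      -- (ii) F is differentiable with the stated gradient
      (∀ w, HasGradientAt
        (fun v => H (θhat v) v + lam / 2 * ‖v‖ ^ 2 + γw * φ v)
        (lam • (w - θhat w) + γw • gradφ w) w) ∧
      -- (iii) ∇F is (λ + λ²/μ + γ_w/ρ)-Lipschitz
      (∀ w w', ‖(lam • (w - θhat w) + γw • gradφ w)
            - (lam • (w' - θhat w') + γw • gradφ w')‖ ≤
          (lam + lam ^ 2 / μ + γw / ρ) * ‖w - w'‖) ∧
      -- (iv) if λ < μ then F is (λ(μ−λ)/μ)-strongly convex
      (lam < μ → ∀ w w',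
        H (θhat w') w' + lam / 2 * ‖w'‖ ^ 2 + γw * φ w' ≥
          (H (θhat w) w + lam / 2 * ‖w‖ ^ 2 + γw * φ w)
          + ⟪lam • (w - θhat w) + γw • gradφ w, w' - w⟫
          + (lam * (μ - lam) / μ) / 2 * ‖w' - w‖ ^ 2) := by
  -- basic φ facts
  have hφgrad : ∀ x : EuclideanSpace ℝ (Fin d), HasGradientAt φ (gradφ x) x := by
    intro x
    have hfe : φ = (fun y : EuclideanSpace ℝ (Fin d) => ρ * ∑ n, Real.log (Real.cosh (y n / ρ))) := funext hφ
    rw [hfe]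
    exact phi_grad hρ x _ (hgradφ x)
  have hφconv : ∀ x y : EuclideanSpace ℝ (Fin d), φ x + ⟪gradφ x, y - x⟫ ≤ φ y := by
    intro x y
    rw [hφ x, hφ y]
    exact phi_convex hρ x y _ (hgradφ x)
  have hφlip : ∀ x y : EuclideanSpace ℝ (Fin d), ‖gradφ x - gradφ y‖ ≤ (1/ρ) * ‖x - y‖ := by
    intro x y
    exact tanh_vec_lip hρ x y _ _ (hgradφ x) (hgradφ y)
  -- gradient of H(·, w)
  have hHgrad : ∀ (w θ : EuclideanSpace ℝ (Fin d)),
      HasGradientAt (fun θ : EuclideanSpace ℝ (Fin d) => H θ w) (gℓ θ + γ • gradφ θ - lam • w) θ := by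
    intro w θ
    have hc := grad_combo3 (x := θ) 1 γ (-lam) (hdiff θ) (hφgrad θ) (grad_inner_right w θ)
    have e1 : (fun y : EuclideanSpace ℝ (Fin d) => H y w) = fun y : EuclideanSpace ℝ (Fin d) => 1 * ℓ y + γ * φ y + (-lam) * ⟪y, w⟫ := by
      funext y; rw [hH]; ring
    have e2 : gℓ θ + γ • gradφ θ - lam • w = (1:ℝ) • gℓ θ + γ • gradφ θ + (-lam) • w := by
      simp [sub_eq_add_neg]
    rw [e1, e2]; exact hc
  -- strong convexity of H(·, w)
  have key : ∀ (w θ₁ θ₂ : EuclideanSpace ℝ (Fin d)),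
      H θ₁ w + ⟪gℓ θ₁ + γ • gradφ θ₁ - lam • w, θ₂ - θ₁⟫ + μ/2 * ‖θ₂ - θ₁‖ ^ 2 ≤ H θ₂ w := by
    intro w θ₁ θ₂
    have h1 := hsc θ₁ θ₂
    have h2 := mul_le_mul_of_nonneg_left (hφconv θ₁ θ₂) hγ
    have h3 : ⟪gℓ θ₁ + γ • gradφ θ₁ - lam • w, θ₂ - θ₁⟫
        = ⟪gℓ θ₁, θ₂ - θ₁⟫ + γ * ⟪gradφ θ₁, θ₂ - θ₁⟫ - lam * ⟪w, θ₂ - θ₁⟫ := by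
      rw [inner_sub_left, inner_add_left, real_inner_smul_left, real_inner_smul_left]
    have h4 : ⟪w, θ₂ - θ₁⟫ = ⟪θ₂, w⟫ - ⟪θ₁, w⟫ := by
      rw [real_inner_comm, inner_sub_left]
    rw [hH θ₁ w, hH θ₂ w, h3, h4]
    rw [mul_add] at h2
    linarith
  -- H θ u - H θ v
  have hHdiff : ∀ (θ u v : EuclideanSpace ℝ (Fin d)), H θ u - H θ v = -(lam * ⟪θ, u - v⟫) := by
    intro θ u v
    rw [hH, hH, inner_sub_right]
    ring
  -- existence of minimizers
  have hexists : ∀ w : EuclideanSpace ℝ (Fin d), ∃ θ₀ : EuclideanSpace ℝ (Fin d), ∀ θ : EuclideanSpace ℝ (Fin d), H θ₀ w ≤ H θ w := by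
    intro w
    have hcont : Continuous (fun θ : EuclideanSpace ℝ (Fin d) => H θ w) := by
      rw [continuous_iff_continuousAt]
      intro θ
      exact (hHgrad w θ).differentiableAt.continuousAt
    apply hcont.exists_forall_le' (0 : EuclideanSpace ℝ (Fin d))
    rw [Filter.eventually_iff, Filter.mem_cocompact]
    set g0 : EuclideanSpace ℝ (Fin d) := gℓ 0 + γ • gradφ 0 - lam • w with hg0
    refine ⟨Metric.closedBall 0 (2 * ‖g0‖ / μ), isCompact_closedBall _ _, ?_⟩
    intro θ hθ
    simp only [Set.mem_compl_iff, Metric.mem_closedBall, dist_zero_right, not_le] at hθ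
    simp only [Set.mem_setOf_eq]
    have hk := key w 0 θ
    rw [sub_zero] at hk
    have hi : |⟪g0, θ⟫| ≤ ‖g0‖ * ‖θ‖ := abs_real_inner_le_norm g0 θ
    have hμθ : 2 * ‖g0‖ < μ * ‖θ‖ := by
      rw [div_lt_iff₀ hμ] at hθ
      nlinarith
    nlinarith [norm_nonneg θ, neg_abs_le (⟪g0, θ⟫ : ℝ)]
  classical
  set θhat : EuclideanSpace ℝ (Fin d) → EuclideanSpace ℝ (Fin d) := fun w => Classical.choose (hexists w) with hθhat
  have hmin : ∀ w θ, H (θhat w) w ≤ H θ w := fun w => Classical.choose_spec (hexists w)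
  -- stationarity
  have hstat : ∀ w : EuclideanSpace ℝ (Fin d), gℓ (θhat w) + γ • gradφ (θhat w) - lam • w = 0 := by
    intro w
    have hloc : IsLocalMin (fun θ : EuclideanSpace ℝ (Fin d) => H θ w) (θhat w) :=
      Filter.Eventually.of_forall (hmin w)
    have hz := hloc.hasFDerivAt_eq_zero (hasGradientAt_iff_hasFDerivAt.mp (hHgrad w (θhat w)))
    have h0 : (InnerProductSpace.toDual ℝ (EuclideanSpace ℝ (Fin d))) (gℓ (θhat w) + γ • gradφ (θhat w) - lam • w)
        = (InnerProductSpace.toDual ℝ (EuclideanSpace ℝ (Fin d))) 0 := by rw [map_zero]; exact hz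
    exact (InnerProductSpace.toDual ℝ (EuclideanSpace ℝ (Fin d))).injective h0
  -- strong min inequality at θhat
  have hkey0 : ∀ (w θ : EuclideanSpace ℝ (Fin d)), H (θhat w) w + μ/2 * ‖θ - θhat w‖ ^ 2 ≤ H θ w := by
    intro w θ
    have hk := key w (θhat w) θ
    rw [hstat w, inner_zero_left] at hk
    linarith
  -- Lipschitz of θhat
  have θlip : ∀ w w' : EuclideanSpace ℝ (Fin d), ‖θhat w - θhat w'‖ ≤ lam/μ * ‖w - w'‖ := by
    intro w w'
    have h1 := hkey0 w (θhat w')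
    have h2 := hkey0 w' (θhat w)
    have h3 := hHdiff (θhat w') w w'
    have h4 := hHdiff (θhat w) w w'
    have h5 : ⟪θhat w', w - w'⟫ - ⟪θhat w, w - w'⟫ = -⟪θhat w - θhat w', w - w'⟫ := by
      rw [inner_sub_left]; ring
    have h6 : ‖θhat w - θhat w'‖ = ‖θhat w' - θhat w‖ := norm_sub_rev _ _
    have h6sq : ‖θhat w - θhat w'‖ ^ 2 = ‖θhat w' - θhat w‖ ^ 2 := by rw [h6]
    have h7 : μ * ‖θhat w - θhat w'‖ ^ 2 ≤ lam * ⟪θhat w - θhat w', w - w'⟫ := by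
      nlinarith [h1, h2, h3, h4, h5, h6sq]
    have h8 : ⟪θhat w - θhat w', w - w'⟫ ≤ ‖θhat w - θhat w'‖ * ‖w - w'‖ :=
      real_inner_le_norm _ _
    have h9 : μ * ‖θhat w - θhat w'‖ ^ 2 ≤ lam * (‖θhat w - θhat w'‖ * ‖w - w'‖) :=
      le_trans h7 (mul_le_mul_of_nonneg_left h8 hlam.le)
    generalize hA : ‖θhat w - θhat w'‖ = a at *
    generalize hB : ‖w - w'‖ = b at *
    have ha0 : 0 ≤ a := hA ▸ norm_nonneg _
    have hb0 : 0 ≤ b := hB ▸ norm_nonneg _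
    rcases ha0.eq_or_lt with h0 | h0
    · rw [← h0]
      positivity
    · rw [div_mul_eq_mul_div, le_div_iff₀ hμ]
      nlinarith
  -- envelope bounds
  have E1 : ∀ w v : EuclideanSpace ℝ (Fin d), H (θhat v) v ≤ H (θhat w) w - lam * ⟪θhat w, v - w⟫ := by
    intro w v
    have h1 := hmin v (θhat w)
    have h2 := hHdiff (θhat w) v w
    linarith
  have E2 : ∀ w v : EuclideanSpace ℝ (Fin d),
      H (θhat w) w - lam * ⟪θhat v, v - w⟫ + μ/2 * ‖θhat v - θhat w‖ ^ 2 ≤ H (θhat v) v := by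
    intro w v
    have h1 := hkey0 w (θhat v)
    have h2 := hHdiff (θhat v) v w
    linarith
  -- inner expansion of total gradient
  have ginner : ∀ w u : EuclideanSpace ℝ (Fin d), ⟪lam • (w - θhat w) + γw • gradφ w, u⟫
      = lam * ⟪w, u⟫ - lam * ⟪θhat w, u⟫ + γw * ⟪gradφ w, u⟫ := by
    intro w u
    rw [inner_add_left, real_inner_smul_left, real_inner_smul_left, inner_sub_left]
    ring
  refine ⟨θhat, hmin, ?_, ?_, ?_, ?_⟩
  · -- uniqueness
    intro w θ' hθ'
    have h1 := hkey0 w θ'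
    have h2 := hθ' (θhat w)
    have h3 : ‖θ' - θhat w‖ ^ 2 ≤ 0 := by nlinarith
    have h4 : ‖θ' - θhat w‖ = 0 := by nlinarith [norm_nonneg (θ' - θhat w)]
    have := norm_sub_eq_zero_iff.mp h4
    exact this
  · -- gradient of F
    intro w
    apply quad_grad (C := lam^2/μ + lam/2 + γw * (1/ρ)) (by positivity)
    intro v
    have hI := ginner w (v - w)
    -- m piece
    have hup : H (θhat v) v - H (θhat w) w + lam * ⟪θhat w, v - w⟫ ≤ 0 := by
      have := E1 w v; linarith
    have hlow : -(lam^2/μ) * ‖v - w‖ ^ 2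
        ≤ H (θhat v) v - H (θhat w) w + lam * ⟪θhat w, v - w⟫ := by
      have h2 := E2 w v
      have h5 : lam * ⟪θhat w, v - w⟫ - lam * ⟪θhat v, v - w⟫
          = -(lam * ⟪θhat v - θhat w, v - w⟫) := by
        rw [inner_sub_left]; ring
      have h6 : |⟪θhat v - θhat w, v - w⟫| ≤ ‖θhat v - θhat w‖ * ‖v - w‖ :=
        abs_real_inner_le_norm _ _
      have h7 : ‖θhat v - θhat w‖ ≤ lam/μ * ‖v - w‖ := by
        have h71 := θlip v w
        have h72 : ‖v - w‖ = ‖w - v‖ := norm_sub_rev _ _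
        linarith
      have h9 : ‖θhat v - θhat w‖ * ‖v - w‖ ≤ lam/μ * ‖v - w‖ * ‖v - w‖ :=
        mul_le_mul_of_nonneg_right h7 (norm_nonneg _)
      have hA : ⟪θhat v - θhat w, v - w⟫ ≤ lam/μ * ‖v - w‖ * ‖v - w‖ :=
        le_trans (le_trans (le_abs_self _) h6) h9
      have hB := mul_le_mul_of_nonneg_left hA hlam.le
      have h10 : lam * (lam/μ * ‖v - w‖ * ‖v - w‖) = lam^2/μ * ‖v - w‖ ^ 2 := by ring
      have hsqn : (0:ℝ) ≤ μ/2 * ‖θhat v - θhat w‖ ^ 2 := by positivity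
      linarith
    -- quadratic piece
    have hq : lam/2 * ‖v‖ ^ 2 - lam/2 * ‖w‖ ^ 2 - lam * ⟪w, v - w⟫ = lam/2 * ‖v - w‖ ^ 2 := by
      have hv : w + (v - w) = v := by abel
      have hn := norm_add_sq_real w (v - w)
      rw [hv] at hn
      rw [hn]; ring
    -- φ piece
    have hφlow : 0 ≤ φ v - φ w - ⟪gradφ w, v - w⟫ := by
      have := hφconv w v; linarith
    have hφup : φ v - φ w - ⟪gradφ w, v - w⟫ ≤ 1/ρ * ‖v - w‖ ^ 2 := by
      have h1 := hφconv v w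
      have h2 : ⟪gradφ v, w - v⟫ = -⟪gradφ v, v - w⟫ := by
        rw [show w - v = -(v - w) by abel, inner_neg_right]
      have h3 : ⟪gradφ v, v - w⟫ - ⟪gradφ w, v - w⟫ = ⟪gradφ v - gradφ w, v - w⟫ := by
        rw [inner_sub_left]
      have h4 : ⟪gradφ v - gradφ w, v - w⟫ ≤ ‖gradφ v - gradφ w‖ * ‖v - w‖ :=
        real_inner_le_norm _ _
      have h5 : ‖gradφ v - gradφ w‖ ≤ 1/ρ * ‖v - w‖ := hφlip v w
      have h6 : ‖gradφ v - gradφ w‖ * ‖v - w‖ ≤ 1/ρ * ‖v - w‖ * ‖v - w‖ :=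
        mul_le_mul_of_nonneg_right h5 (norm_nonneg _)
      have h7 : 1/ρ * ‖v - w‖ * ‖v - w‖ = 1/ρ * ‖v - w‖ ^ 2 := by ring
      linarith
    have hγup := mul_le_mul_of_nonneg_left hφup hγw
    have hγlow := mul_le_mul_of_nonneg_left hφlow hγw
    rw [abs_le]
    constructor
    · rw [hI]
      have hsq : (0:ℝ) ≤ ‖v - w‖ ^ 2 := sq_nonneg _
      nlinarith [hγlow, hγup, hlow, hq, hsq]
    · rw [hI]
      have hsq : (0:ℝ) ≤ ‖v - w‖ ^ 2 := sq_nonneg _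
      nlinarith [hγlow, hγup, hup, hq, hsq]
  · -- Lipschitz gradient
    intro w w'
    have e : (lam • (w - θhat w) + γw • gradφ w) - (lam • (w' - θhat w') + γw • gradφ w')
        = lam • (w - w') - lam • (θhat w - θhat w') + γw • (gradφ w - gradφ w') := by
      simp only [smul_sub]
      abel
    rw [e]
    have h1 : ‖lam • (w - w') - lam • (θhat w - θhat w') + γw • (gradφ w - gradφ w')‖
        ≤ ‖lam • (w - w')‖ + ‖lam • (θhat w - θhat w')‖ + ‖γw • (gradφ w - gradφ w')‖ := by
      calc _ ≤ ‖lam • (w - w') - lam • (θhat w - θhat w')‖ + ‖γw • (gradφ w - gradφ w')‖ :=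
            norm_add_le _ _
        _ ≤ _ := by
            have := norm_sub_le (lam • (w - w')) (lam • (θhat w - θhat w'))
            linarith
    have h2 : ‖lam • (w - w')‖ = lam * ‖w - w'‖ := by
      rw [norm_smul, Real.norm_eq_abs, abs_of_pos hlam]
    have h3 : ‖lam • (θhat w - θhat w')‖ ≤ lam * (lam/μ * ‖w - w'‖) := by
      rw [norm_smul, Real.norm_eq_abs, abs_of_pos hlam]
      exact mul_le_mul_of_nonneg_left (θlip w w') hlam.le
    have h4 : ‖γw • (gradφ w - gradφ w')‖ ≤ γw * (1/ρ * ‖w - w'‖) := by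
      rw [norm_smul, Real.norm_eq_abs, abs_of_nonneg hγw]
      exact mul_le_mul_of_nonneg_left (hφlip w w') hγw
    have h5 : lam * ‖w - w'‖ + lam * (lam/μ * ‖w - w'‖) + γw * (1/ρ * ‖w - w'‖)
        = (lam + lam ^ 2 / μ + γw / ρ) * ‖w - w'‖ := by ring
    linarith
  · -- strong convexity of F
    intro hlt w w'
    have hI := ginner w (w' - w)
    have h2μ : (0:ℝ) < 2 * μ := by linarith
    -- m piece
    have hm : H (θhat w') w' ≥ H (θhat w) w - lam * ⟪θhat w, w' - w⟫
        - lam^2/(2*μ) * ‖w' - w‖ ^ 2 := by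
      have h1 := E2 w w'
      have h5 : lam * ⟪θhat w', w' - w⟫
          = lam * ⟪θhat w, w' - w⟫ + lam * ⟪θhat w' - θhat w, w' - w⟫ := by
        rw [inner_sub_left]; ring
      have h6 : ⟪θhat w' - θhat w, w' - w⟫ ≤ ‖θhat w' - θhat w‖ * ‖w' - w‖ :=
        real_inner_le_norm _ _
      have h6' := mul_le_mul_of_nonneg_left h6 hlam.le
      have hq : lam * (‖θhat w' - θhat w‖ * ‖w' - w‖) - μ/2 * ‖θhat w' - θhat w‖ ^ 2
          ≤ lam^2/(2*μ) * ‖w' - w‖ ^ 2 := by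
        rw [show lam^2/(2*μ) * ‖w' - w‖ ^ 2 = (lam^2 * ‖w' - w‖ ^ 2) / (2*μ) by ring,
          le_div_iff₀ h2μ]
        nlinarith [sq_nonneg (μ * ‖θhat w' - θhat w‖ - lam * ‖w' - w‖)]
      linarith
    -- quadratic piece
    have hq2 : lam/2 * ‖w'‖ ^ 2 = lam/2 * ‖w‖ ^ 2 + lam * ⟪w, w' - w⟫ + lam/2 * ‖w' - w‖ ^ 2 := by
      have hv : w + (w' - w) = w' := by abel
      have hn := norm_add_sq_real w (w' - w)
      rw [hv] at hn
      rw [hn]; ring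
    -- φ piece
    have hφ2 : γw * φ w' ≥ γw * φ w + γw * ⟪gradφ w, w' - w⟫ := by
      have := mul_le_mul_of_nonneg_left (hφconv w w') hγw
      rw [mul_add] at this
      linarith
    have hco2 : (lam * (μ - lam) / μ) / 2 * ‖w' - w‖ ^ 2
        = lam/2 * ‖w' - w‖ ^ 2 - lam^2/(2*μ) * ‖w' - w‖ ^ 2 := by
      field_simp
    rw [ge_iff_le, hI]
    linarith
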